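/- arXiv:1703.03769 — 2 statements merged into one kernel-verified Lean document; each statement's English description precedes it below -/
import Mathlib

section
/- In the setting of the previous chain with Potts potentials, the local-polytope relaxation with the linear projection constraint Σ_u Σ_{x_u} x_u μ_u(x_u) = b has optimal value 0 whenever 0 ≤ b ≤ n: setting μ_u(1) = b/n, μ_u(0) = 1 - b/n for all u and μ_{uv}(x,x) = μ_u(x), μ_{uv}(x,y)=0 for x≠y gives a feasible point of cost 0. Hence for 1 ≤ b ≤ n-1 the relaxation is strictly less than the integer optimum. -/
/-- For the chain of `n + 1` binary variables with Potts potentials and projection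
constraint `Σᵤ μᵤ(1) = b`, the local polytope relaxation has a feasible point of
objective value `0` whenever `0 ≤ b ≤ n + 1` (given by `μᵤ(1) = b/(n+1)` and diagonal
pairwise marginals); moreover, for `1 ≤ b ≤ n` every integral labeling satisfying the
projection constraint has energy at least `1`, so the relaxation is strictly less than
the integer optimum. -/
theorem stmt_8 (n : ℕ) (hn : 1 ≤ n) (b : ℝ) (hb0 : 0 ≤ b) (hbn : b ≤ n + 1) :
    (∃ (μu : Fin (n + 1) → Fin 2 → ℝ) (μe : Fin n → Fin 2 → Fin 2 → ℝ),
      (∀ u a, 0 ≤ μu u a) ∧ (∀ e a a', 0 ≤ μe e a a') ∧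
      (∀ u, ∑ a, μu u a = 1) ∧
      (∀ e a', ∑ a, μe e a a' = μu e.succ a') ∧
      (∀ e a, ∑ a', μe e a a' = μu e.castSucc a) ∧
      (∑ u, μu u 1 = b) ∧
      (∑ e, ∑ a, ∑ a', (if a = a' then (0 : ℝ) else 1) * μe e a a' = 0)) ∧
    (1 ≤ b → b ≤ n →
      ∀ x : Fin (n + 1) → Fin 2, (∑ i, ((x i : ℕ) : ℝ)) = b →
        (1 : ℝ) ≤ ∑ e : Fin n, (if x e.castSucc = x e.succ then (0 : ℝ) else 1)) := by
  have hpos : (0:ℝ) < n + 1 := by positivity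
  set q : ℝ := b / (n + 1) with hqdef
  have hq0 : (0:ℝ) ≤ q := div_nonneg hb0 hpos.le
  have hq1 : q ≤ 1 := by rw [hqdef, div_le_one hpos]; linarith
  constructor
  · refine ⟨fun _ a => if a = 1 then q else 1 - q,
      fun _ a a' => if a = a' then (if a = 1 then q else 1 - q) else 0,
      ?_, ?_, ?_, ?_, ?_, ?_, ?_⟩
    · intro u a; dsimp only; split <;> linarith
    · intro e a a'; dsimp only; split
      · split <;> linarith
      · exact le_refl 0
    · intro u; simp [Fin.sum_univ_two]
    · intro e a'; fin_cases a' <;> simp [Fin.sum_univ_two]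
    · intro e a; fin_cases a <;> simp [Fin.sum_univ_two]
    · simp only [if_pos rfl, Finset.sum_const, Finset.card_univ, Fintype.card_fin,
        nsmul_eq_mul, hqdef]
      push_cast
      field_simp
    · refine Finset.sum_eq_zero fun e _ => Finset.sum_eq_zero fun a _ =>
        Finset.sum_eq_zero fun a' _ => ?_
      by_cases h : a = a' <;> simp [h]
  · intro hb1 hbn' x hx
    by_cases hall : ∀ e : Fin n, x e.castSucc = x e.succ
    · exfalso
      have hconst : ∀ i : Fin (n + 1), x i = x 0 := by
        intro i
        induction i using Fin.induction with
        | zero => rfl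
        | succ i ih => rw [← hall i]; exact ih
      have hsum : (∑ i : Fin (n+1), ((x i : ℕ) : ℝ)) = (n+1) * ((x 0 : ℕ) : ℝ) := by
        rw [Finset.sum_congr rfl fun i _ => by rw [hconst i]]
        simp [Finset.sum_const, Finset.card_univ]
      rw [hsum] at hx
      have h0 : x 0 = 0 ∨ x 0 = 1 := by omega
      rcases h0 with h0 | h0 <;> rw [h0] at hx <;> simp at hx
      · linarith
      · have : ((n:ℝ)) + 1 ≤ n := by linarith [hbn', hx]
        linarith
    · push_neg at hall
      obtain ⟨e, he⟩ := hall
      have : (if x e.castSucc = x e.succ then (0:ℝ) else 1) = 1 := if_neg he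
      calc (1:ℝ) = (if x e.castSucc = x e.succ then (0:ℝ) else 1) := this.symm
        _ ≤ _ := Finset.single_le_sum (f := fun e : Fin n => if x e.castSucc = x e.succ then (0:ℝ) else 1)
            (fun i _ => by split <;> norm_num) (Finset.mem_univ e)
end

section
/- Conversely, given consistent counting labels x_{i:j} = (a, s, a'), x_{j+1:l} = (c, t, c'), x_{i:l} = (a, s + a' + c + t, c') with all subsums achievable (s ≤ (j-i-1)(k-1), t ≤ (l-j-2)(k-1)), there exists a full labeling x of [i,l] in {0,...,k-1} inducing exactly these counting labels. -/
lemma sum_min_aux (d : ℕ) : ∀ n s : ℕ, ∑ r ∈ Finset.range n, min d (s - d * r) = min s (n * d) := by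
  intro n
  induction n with
  | zero => simp
  | succ n ih =>
    intro s
    rw [Finset.sum_range_succ, ih]
    have h1 : d * n = n * d := Nat.mul_comm _ _
    have h2 : (n + 1) * d = n * d + d := by ring
    rw [h1, h2]
    generalize n * d = m
    omega

/-- Conversely, given consistent counting labels `x_{i:j} = (a, s, a')`,
`x_{j+1:l} = (c, t, c')` and `x_{i:l} = (a, s + a' + c + t, c')` with achievable subsums
(`s ≤ (j-i-1)(k-1)` and `t ≤ (l-j-2)(k-1)`), there exists a full labeling `x` of `[i, l]`
with values in `{0, …, k-1}` inducing exactly these counting labels. -/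
theorem stmt_16 (k i j l s t : ℕ) (hk : 1 ≤ k) (hij : i < j) (hjl : j + 1 < l)
    (a a' c c' : Fin k)
    (hs : s ≤ (j - i - 1) * (k - 1)) (ht : t ≤ (l - j - 2) * (k - 1)) :
    ∃ x : ℕ → Fin k,
      x i = a ∧ x j = a' ∧ x (j + 1) = c ∧ x l = c' ∧
      (∑ m ∈ Finset.Ioo i j, (x m : ℕ)) = s ∧
      (∑ m ∈ Finset.Ioo (j + 1) l, (x m : ℕ)) = t ∧
      (∑ m ∈ Finset.Ioo i l, (x m : ℕ)) = s + (a' : ℕ) + (c : ℕ) + t := by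
  have hlt : ∀ u v : ℕ, min (k - 1) u < k := by
    intro u v
    exact lt_of_le_of_lt (Nat.min_le_left _ _) (Nat.sub_lt hk Nat.one_pos)
  refine ⟨fun n =>
    if n = i then a else if n = j then a' else if n = j + 1 then c else if n = l then c'
    else if n ∈ Finset.Ioo i j then ⟨min (k - 1) (s - (k - 1) * (n - i - 1)), hlt _ 0⟩
    else if n ∈ Finset.Ioo (j + 1) l then ⟨min (k - 1) (t - (k - 1) * (n - j - 2)), hlt _ 0⟩
    else ⟨0, hk⟩, ?_, ?_, ?_, ?_, ?_, ?_, ?_⟩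
  · simp
  · simp only [if_neg (by omega : j ≠ i)]; simp
  · simp only [if_neg (by omega : j + 1 ≠ i), if_neg (by omega : j + 1 ≠ j)]; simp
  · simp only [if_neg (by omega : l ≠ i), if_neg (by omega : l ≠ j),
      if_neg (by omega : l ≠ j + 1)]; simp
  · -- sum over Ioo i j
    have key : ∀ m ∈ Finset.Ioo i j,
        ((if m = i then a else if m = j then a' else if m = j + 1 then c else if m = l then c'
        else if m ∈ Finset.Ioo i j then ⟨min (k - 1) (s - (k - 1) * (m - i - 1)), hlt _ 0⟩
        else if m ∈ Finset.Ioo (j + 1) l then ⟨min (k - 1) (t - (k - 1) * (m - j - 2)), hlt _ 0⟩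
        else ⟨0, hk⟩ : Fin k) : ℕ) = min (k - 1) (s - (k - 1) * (m - i - 1)) := by
      intro m hm
      rw [Finset.mem_Ioo] at hm
      rw [if_neg (by omega), if_neg (by omega), if_neg (by omega), if_neg (by omega),
        if_pos (Finset.mem_Ioo.2 hm)]
    rw [Finset.sum_congr rfl key]
    have : Finset.Ioo i j = Finset.Ico (i + 1) j := rfl
    rw [this, Finset.sum_Ico_eq_sum_range]
    have : ∀ r, min (k - 1) (s - (k - 1) * (i + 1 + r - i - 1)) = min (k - 1) (s - (k - 1) * r) := by
      intro r; have hr : i + 1 + r - i - 1 = r := by omega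
      rw [hr]
    simp only [this]
    rw [sum_min_aux]
    have : j - (i + 1) = j - i - 1 := by omega
    rw [this]
    omega
  · -- sum over Ioo (j+1) l
    have key : ∀ m ∈ Finset.Ioo (j + 1) l,
        ((if m = i then a else if m = j then a' else if m = j + 1 then c else if m = l then c'
        else if m ∈ Finset.Ioo i j then ⟨min (k - 1) (s - (k - 1) * (m - i - 1)), hlt _ 0⟩
        else if m ∈ Finset.Ioo (j + 1) l then ⟨min (k - 1) (t - (k - 1) * (m - j - 2)), hlt _ 0⟩
        else ⟨0, hk⟩ : Fin k) : ℕ) = min (k - 1) (t - (k - 1) * (m - j - 2)) := by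
      intro m hm
      rw [Finset.mem_Ioo] at hm
      rw [if_neg (by omega), if_neg (by omega), if_neg (by omega), if_neg (by omega),
        if_neg (by rw [Finset.mem_Ioo]; omega), if_pos (Finset.mem_Ioo.2 hm)]
    rw [Finset.sum_congr rfl key]
    have : Finset.Ioo (j + 1) l = Finset.Ico (j + 2) l := rfl
    rw [this, Finset.sum_Ico_eq_sum_range]
    have : ∀ r, min (k - 1) (t - (k - 1) * (j + 2 + r - j - 2)) = min (k - 1) (t - (k - 1) * r) := by
      intro r; have hr : j + 2 + r - j - 2 = r := by omega
      rw [hr]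
    simp only [this]
    rw [sum_min_aux]
    have : l - (j + 2) = l - j - 2 := by omega
    rw [this]
    omega
  · rw [show Finset.Ioo i l = Finset.Ico (i + 1) l from rfl,
      ← Finset.sum_Ico_consecutive _ (show i + 1 ≤ j by omega) (show j ≤ l by omega),
      Finset.sum_eq_sum_Ico_succ_bot (show j < l by omega),
      Finset.sum_eq_sum_Ico_succ_bot (show j + 1 < l by omega)]
    have e1 : ((if j = i then a else if j = j then a' else if j = j + 1 then c else if j = l then c'
        else if j ∈ Finset.Ioo i j then (⟨min (k - 1) (s - (k - 1) * (j - i - 1)), hlt _ 0⟩ : Fin k)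
        else if j ∈ Finset.Ioo (j + 1) l then ⟨min (k - 1) (t - (k - 1) * (j - j - 2)), hlt _ 0⟩
        else ⟨0, hk⟩ : Fin k) : ℕ) = (a' : ℕ) := by
      rw [if_neg (by omega : j ≠ i)]; simp
    have e2 : ((if j + 1 = i then a else if j + 1 = j then a' else if j + 1 = j + 1 then c
        else if j + 1 = l then c'
        else if j + 1 ∈ Finset.Ioo i j then
          (⟨min (k - 1) (s - (k - 1) * (j + 1 - i - 1)), hlt _ 0⟩ : Fin k)
        else if j + 1 ∈ Finset.Ioo (j + 1) l then
          ⟨min (k - 1) (t - (k - 1) * (j + 1 - j - 2)), hlt _ 0⟩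
        else ⟨0, hk⟩ : Fin k) : ℕ) = (c : ℕ) := by
      rw [if_neg (by omega : j + 1 ≠ i), if_neg (by omega : j + 1 ≠ j)]; simp
    have e3 : (∑ m ∈ Finset.Ico (i + 1) j,
        ((if m = i then a else if m = j then a' else if m = j + 1 then c else if m = l then c'
        else if m ∈ Finset.Ioo i j then (⟨min (k - 1) (s - (k - 1) * (m - i - 1)), hlt _ 0⟩ : Fin k)
        else if m ∈ Finset.Ioo (j + 1) l then ⟨min (k - 1) (t - (k - 1) * (m - j - 2)), hlt _ 0⟩
        else ⟨0, hk⟩ : Fin k) : ℕ)) = s := by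
      have key : ∀ m ∈ Finset.Ico (i + 1) j,
          ((if m = i then a else if m = j then a' else if m = j + 1 then c else if m = l then c'
          else if m ∈ Finset.Ioo i j then
            (⟨min (k - 1) (s - (k - 1) * (m - i - 1)), hlt _ 0⟩ : Fin k)
          else if m ∈ Finset.Ioo (j + 1) l then ⟨min (k - 1) (t - (k - 1) * (m - j - 2)), hlt _ 0⟩
          else ⟨0, hk⟩ : Fin k) : ℕ) = min (k - 1) (s - (k - 1) * (m - i - 1)) := by
        intro m hm
        rw [Finset.mem_Ico] at hm
        rw [if_neg (by omega), if_neg (by omega), if_neg (by omega), if_neg (by omega),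
          if_pos (Finset.mem_Ioo.2 (by omega))]
      rw [Finset.sum_congr rfl key, Finset.sum_Ico_eq_sum_range]
      have hr : ∀ r, min (k - 1) (s - (k - 1) * (i + 1 + r - i - 1))
          = min (k - 1) (s - (k - 1) * r) := by
        intro r; have hr' : i + 1 + r - i - 1 = r := by omega
        rw [hr']
      simp only [hr]
      rw [sum_min_aux]
      have h' : j - (i + 1) = j - i - 1 := by omega
      rw [h']; omega
    have e4 : (∑ m ∈ Finset.Ico (j + 1 + 1) l,
        ((if m = i then a else if m = j then a' else if m = j + 1 then c else if m = l then c'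
        else if m ∈ Finset.Ioo i j then (⟨min (k - 1) (s - (k - 1) * (m - i - 1)), hlt _ 0⟩ : Fin k)
        else if m ∈ Finset.Ioo (j + 1) l then ⟨min (k - 1) (t - (k - 1) * (m - j - 2)), hlt _ 0⟩
        else ⟨0, hk⟩ : Fin k) : ℕ)) = t := by
      have key : ∀ m ∈ Finset.Ico (j + 1 + 1) l,
          ((if m = i then a else if m = j then a' else if m = j + 1 then c else if m = l then c'
          else if m ∈ Finset.Ioo i j then
            (⟨min (k - 1) (s - (k - 1) * (m - i - 1)), hlt _ 0⟩ : Fin k)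
          else if m ∈ Finset.Ioo (j + 1) l then ⟨min (k - 1) (t - (k - 1) * (m - j - 2)), hlt _ 0⟩
          else ⟨0, hk⟩ : Fin k) : ℕ) = min (k - 1) (t - (k - 1) * (m - j - 2)) := by
        intro m hm
        rw [Finset.mem_Ico] at hm
        rw [if_neg (by omega), if_neg (by omega), if_neg (by omega), if_neg (by omega),
          if_neg (by rw [Finset.mem_Ioo]; omega), if_pos (Finset.mem_Ioo.2 (by omega))]
      rw [Finset.sum_congr rfl key, Finset.sum_Ico_eq_sum_range]
      have hr : ∀ r, min (k - 1) (t - (k - 1) * (j + 1 + 1 + r - j - 2))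
          = min (k - 1) (t - (k - 1) * r) := by
        intro r; have hr' : j + 1 + 1 + r - j - 2 = r := by omega
        rw [hr']
      simp only [hr]
      rw [sum_min_aux]
      have h' : l - (j + 1 + 1) = l - j - 2 := by omega
      rw [h']; omega
    rw [e1, e2, e3, e4]; ring
end
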